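/- In the BMW algebra B of a simply laced Coxeter diagram, for adjacent nodes i and j one has g_j e_i g_j = g_i^{-1} e_j g_i^{-1} = g_i e_j g_i + m(e_j g_i - e_i g_j + g_i e_j - g_j e_i) + m^2 (e_j - e_i). -/

import Mathlib

noncomputable section

/-- The base field ℚ(l,x): rational functions in two variables over ℚ. -/
abbrev BMWField : Type := FractionRing (MvPolynomial (Fin 2) ℚ)

/-- The parameter `l`. -/
def lP : BMWField := algebraMap (MvPolynomial (Fin 2) ℚ) BMWField (MvPolynomial.X 0)

/-- The parameter `x`. -/
def xP : BMWField := algebraMap (MvPolynomial (Fin 2) ℚ) BMWField (MvPolynomial.X 1)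

/-- The parameter `m = (l - l⁻¹)/(1 - x)`. -/
def mP : BMWField := (lP - lP⁻¹) / (1 - xP)

/-- The free algebra on generators `g_i` (left summand) and `e_i` (right summand). -/
abbrev BMWFree (n : ℕ) : Type := FreeAlgebra BMWField (Fin n ⊕ Fin n)

/-- The generator `g_i` of the free algebra. -/
def Gf (n : ℕ) (i : Fin n) : BMWFree n := FreeAlgebra.ι BMWField (Sum.inl i)

/-- The generator `e_i` of the free algebra. -/
def Ef (n : ℕ) (i : Fin n) : BMWFree n := FreeAlgebra.ι BMWField (Sum.inr i)

/-- The defining relations (B1), (B2), (D1), (R1), (R2) of the BMW algebra of a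
simply laced diagram on `n` nodes with adjacency relation `adj`. -/
inductive BMWRel (n : ℕ) (adj : Fin n → Fin n → Prop) : BMWFree n → BMWFree n → Prop
  | comm (i j : Fin n) (hne : i ≠ j) (h : ¬ adj i j) :
      BMWRel n adj (Gf n i * Gf n j) (Gf n j * Gf n i)
  | braid (i j : Fin n) (h : adj i j) :
      BMWRel n adj (Gf n i * Gf n j * Gf n i) (Gf n j * Gf n i * Gf n j)
  | defE (i : Fin n) :
      BMWRel n adj (mP • Ef n i) (lP • (Gf n i * Gf n i + mP • Gf n i - 1))
  | ge (i : Fin n) :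
      BMWRel n adj (Gf n i * Ef n i) (lP⁻¹ • Ef n i)
  | ege (i j : Fin n) (h : adj i j) :
      BMWRel n adj (Ef n i * Gf n j * Ef n i) (lP • Ef n i)

/-- The BMW algebra of the diagram, over ℚ(l,x). -/
abbrev BMW (n : ℕ) (adj : Fin n → Fin n → Prop) : Type := RingQuot (BMWRel n adj)

/-- The generator `g_i` of the BMW algebra. -/
def gg (n : ℕ) (adj : Fin n → Fin n → Prop) (i : Fin n) : BMW n adj :=
  RingQuot.mkAlgHom BMWField (BMWRel n adj) (Gf n i)

/-- The generator `e_i` of the BMW algebra. -/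
def ee (n : ℕ) (adj : Fin n → Fin n → Prop) (i : Fin n) : BMW n adj :=
  RingQuot.mkAlgHom BMWField (BMWRel n adj) (Ef n i)

namespace BMWProof

lemma inj : Function.Injective (algebraMap (MvPolynomial (Fin 2) ℚ) BMWField) :=
  IsFractionRing.injective _ _

lemma lP_ne : lP ≠ 0 := by
  simp only [lP]
  rw [Ne, map_eq_zero_iff _ inj]
  exact MvPolynomial.X_ne_zero 0

lemma hx1 : (1 : BMWField) - xP ≠ 0 := by
  rw [sub_ne_zero]
  intro h
  have h2 : (MvPolynomial.X 1 : MvPolynomial (Fin 2) ℚ) = 1 := by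
    apply inj; simpa [xP] using h.symm
  have := congrArg (MvPolynomial.eval ![0,0]) h2
  simp at this

lemma sq_ne_x : lP * lP ≠ xP := by
  intro h
  have h2 : (MvPolynomial.X 0 * MvPolynomial.X 0 : MvPolynomial (Fin 2) ℚ) = MvPolynomial.X 1 := by
    apply inj; simpa [lP, xP, map_mul] using h
  have := congrArg (MvPolynomial.eval ![1,0]) h2
  simp at this

lemma sq_ne_one : lP * lP ≠ 1 := by
  intro h
  have h2 : (MvPolynomial.X 0 * MvPolynomial.X 0 : MvPolynomial (Fin 2) ℚ) = 1 := by
    apply inj; simpa [lP, map_mul] using h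
  have := congrArg (MvPolynomial.eval ![2,0]) h2
  norm_num at this

lemma mP_ne : mP ≠ 0 := by
  rw [mP]
  apply div_ne_zero _ hx1
  rw [sub_ne_zero]
  intro h
  apply sq_ne_one
  have := congrArg (lP * ·) h
  simpa [mul_inv_cancel₀ lP_ne] using this

lemma hmsub : mP * (1 - xP) = lP - lP⁻¹ := div_mul_cancel₀ _ hx1

lemma hlm : lP⁻¹ + mP - mP * xP = lP := by linear_combination hmsub

lemma hlm_ne : lP⁻¹ + mP ≠ 0 := by
  intro h
  apply sq_ne_x
  have h1 : mP = -lP⁻¹ := by linear_combination h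
  have h2 := hmsub
  rw [h1] at h2
  have h3 : lP⁻¹ * lP = 1 := inv_mul_cancel₀ lP_ne
  linear_combination (-lP) * h2 + xP * h3

lemma hmx : lP * (lP⁻¹ * lP⁻¹) + lP * (mP * lP⁻¹) - lP = mP * xP := by
  have h3 : lP⁻¹ * lP = 1 := inv_mul_cancel₀ lP_ne
  linear_combination hmsub + (lP⁻¹ + mP) * h3

end BMWProof
section Abstract

lemma smul_cancel' {K : Type*} [Field K] {A : Type*} [AddCommMonoid A] [Module K A]
    {c : K} (hc : c ≠ 0) {a b : A} (h : c • a = c • b) : a = b := by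
  have := congrArg (fun z => c⁻¹ • z) h
  simpa [inv_smul_smul₀ hc] using this

variable {A : Type} [Ring A] [Algebra BMWField A]

structure BMWRelSet (gi gj ei ej : A) : Prop where
  braid : gi * gj * gi = gj * gi * gj
  defEi : mP • ei = lP • (gi * gi + mP • gi - 1)
  defEj : mP • ej = lP • (gj * gj + mP • gj - 1)
  gei : gi * ei = lP⁻¹ • ei
  gej : gj * ej = lP⁻¹ • ej
  egeij : ei * gj * ei = lP • ei
  egeji : ej * gi * ej = lP • ej

namespace BMWRelSet

variable {gi gj ei ej : A} (h : BMWRelSet gi gj ei ej)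

include h

lemma swap : BMWRelSet gj gi ej ei :=
  ⟨h.braid.symm, h.defEj, h.defEi, h.gej, h.gei, h.egeji, h.egeij⟩

lemma eig : ei * gi = lP⁻¹ • ei := by
  apply smul_cancel' BMWProof.mP_ne
  calc mP • (ei * gi) = (mP • ei) * gi := (smul_mul_assoc _ _ _).symm
    _ = lP • ((gi * gi + mP • gi - 1) * gi) := by rw [h.defEi, smul_mul_assoc]
    _ = lP • (gi * (gi * gi + mP • gi - 1)) := by
        congr 1
        simp only [sub_mul, add_mul, mul_sub, mul_add, smul_mul_assoc, mul_smul_comm,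
          one_mul, mul_one, mul_assoc]
    _ = gi * (lP • (gi * gi + mP • gi - 1)) := (mul_smul_comm _ _ _).symm
    _ = gi * (mP • ei) := by rw [← h.defEi]
    _ = mP • (gi * ei) := mul_smul_comm _ _ _
    _ = mP • (lP⁻¹ • ei) := by rw [h.gei]

lemma sq : gi * gi = (lP⁻¹ * mP) • ei - mP • gi + 1 := by
  have h1 := congrArg (fun z => lP⁻¹ • z) h.defEi
  simp only [smul_smul, inv_mul_cancel₀ BMWProof.lP_ne, one_smul] at h1
  rw [h1]; abel

lemma mul_ginv : gi * (gi + mP • 1 - mP • ei) = 1 := by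
  rw [mul_sub, mul_add, mul_smul_comm, mul_one, mul_smul_comm, h.gei, h.sq,
    smul_smul, mul_comm mP lP⁻¹]
  abel

lemma ginv_mul : (gi + mP • 1 - mP • ei) * gi = 1 := by
  rw [sub_mul, add_mul, smul_mul_assoc, one_mul, smul_mul_assoc, h.eig, h.sq,
    smul_smul, mul_comm mP lP⁻¹]
  abel

lemma ee : ei * ei = xP • ei := by
  apply smul_cancel' BMWProof.mP_ne
  calc mP • (ei * ei) = (mP • ei) * ei := (smul_mul_assoc _ _ _).symm
    _ = lP • ((gi * gi + mP • gi - 1) * ei) := by rw [h.defEi, smul_mul_assoc]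
    _ = lP • ((lP⁻¹ * lP⁻¹) • ei + (mP * lP⁻¹) • ei - ei) := by
        rw [sub_mul, add_mul, one_mul, smul_mul_assoc, mul_assoc, h.gei, mul_smul_comm,
          h.gei, smul_smul, smul_smul]
    _ = mP • (xP • ei) := by
        rw [smul_sub, smul_add, smul_smul, smul_smul, smul_smul, ← add_smul, ← sub_smul]
        congr 1
        linear_combination BMWProof.hmx

lemma zeq : ei * gj * gi = gj * gi * ej := by
  apply smul_cancel' BMWProof.mP_ne
  have hb1 : gi * (gj * gi) = gj * (gi * gj) := by
    simpa only [mul_assoc] using h.braid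
  have hb2 : gi * gi * (gj * gi) = gj * gi * (gj * gj) := by
    calc gi * gi * (gj * gi) = gi * (gi * (gj * gi)) := by rw [mul_assoc]
      _ = gi * (gj * (gi * gj)) := by rw [hb1]
      _ = (gi * gj * gi) * gj := by simp only [mul_assoc]
      _ = (gj * gi * gj) * gj := by rw [h.braid]
      _ = gj * gi * (gj * gj) := by simp only [mul_assoc]
  have hr : (gj * gi) * (mP • ej)
      = lP • (gj * gi * (gj * gj) + mP • (gj * (gi * gj)) - gj * gi) := by
    rw [h.defEj, mul_smul_comm, mul_sub, mul_add, mul_one, mul_smul_comm,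
      mul_assoc gj gi gj]
  calc mP • (ei * gj * gi) = (mP • ei) * (gj * gi) := by
        rw [smul_mul_assoc, mul_assoc]
    _ = lP • ((gi * gi + mP • gi - 1) * (gj * gi)) := by rw [h.defEi, smul_mul_assoc]
    _ = lP • (gj * gi * (gj * gj) + mP • (gj * (gi * gj)) - gj * gi) := by
        rw [sub_mul, add_mul, one_mul, smul_mul_assoc, hb2, hb1]
    _ = (gj * gi) * (mP • ej) := hr.symm
    _ = mP • (gj * gi * ej) := mul_smul_comm _ _ _

lemma z_ei : ei * gj * gi * ei = ei := by
  calc ei * gj * gi * ei = ei * gj * (gi * ei) := by rw [mul_assoc]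
    _ = lP⁻¹ • (ei * gj * ei) := by rw [h.gei, mul_smul_comm]
    _ = ei := by rw [h.egeij, smul_smul, inv_mul_cancel₀ BMWProof.lP_ne, one_smul]

lemma gi_z : gi * (gj * gi * ej) = lP⁻¹ • (gj * gi * ej) := by
  calc gi * (gj * gi * ej) = (gi * gj * gi) * ej := by simp only [mul_assoc]
    _ = (gj * gi * gj) * ej := by rw [h.braid]
    _ = gj * gi * (gj * ej) := by rw [mul_assoc]
    _ = lP⁻¹ • (gj * gi * ej) := by rw [h.gej, mul_smul_comm, mul_assoc]

lemma eiejg : gi * gj * ei * ej = ej := by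
  calc gi * gj * ei * ej = ej * gi * gj * ej := by rw [← h.swap.zeq]
    _ = ej * gi * (gj * ej) := by rw [mul_assoc]
    _ = lP⁻¹ • (ej * gi * ej) := by rw [h.gej, mul_smul_comm]
    _ = ej := by rw [h.egeji, smul_smul, inv_mul_cancel₀ BMWProof.lP_ne, one_smul]

end BMWRelSet

end Abstract
namespace BMWProof
lemma hinvml : lP⁻¹ * mP * lP = mP := by
  rw [mul_comm lP⁻¹ mP, mul_assoc, inv_mul_cancel₀ lP_ne, mul_one]
end BMWProof

set_option maxHeartbeats 1000000

section Abstract2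

variable {A : Type} [Ring A] [Algebra BMWField A]

namespace BMWRelSet

variable {gi gj ei ej : A} (h : BMWRelSet gi gj ei ej)

include h

lemma eiej : ei * ej = gj * gi * ej := by
  rw [← sub_eq_zero]
  have hgiW : gi * (ei * ej - gj * gi * ej) = lP⁻¹ • (ei * ej - gj * gi * ej) := by
    rw [mul_sub, smul_sub, ← mul_assoc gi ei ej, h.gei, smul_mul_assoc, h.gi_z]
  have heiW : ei * (ei * ej - gj * gi * ej) = xP • (ei * ej - gj * gi * ej) := by
    rw [mul_sub, smul_sub, ← mul_assoc ei ei ej, h.ee, smul_mul_assoc]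
    congr 1
    calc ei * (gj * gi * ej) = (ei * gj * gi) * ej := by simp only [mul_assoc]
      _ = (gj * gi * ej) * ej := by rw [h.zeq]
      _ = gj * gi * (ej * ej) := by simp only [mul_assoc]
      _ = xP • (gj * gi * ej) := by rw [h.swap.ee, mul_smul_comm]
  have e_gigj : gi * (gj * (gi * ej)) = lP⁻¹ • (gj * (gi * ej)) := by
    calc gi * (gj * (gi * ej)) = gi * (gj * gi * ej) := by simp only [mul_assoc]
      _ = lP⁻¹ • (gj * gi * ej) := h.gi_z
      _ = lP⁻¹ • (gj * (gi * ej)) := by rw [mul_assoc]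
  have e_gigi : gi * (gi * ej) = (lP⁻¹ * mP) • (ei * ej) - mP • (gi * ej) + ej := by
    calc gi * (gi * ej) = (gi * gi) * ej := by rw [mul_assoc]
      _ = ((lP⁻¹ * mP) • ei - mP • gi + 1) * ej := by rw [h.sq]
      _ = (lP⁻¹ * mP) • (ei * ej) - mP • (gi * ej) + ej := by
          rw [add_mul, sub_mul, one_mul, smul_mul_assoc, smul_mul_assoc]
  have hB : gi * (gj * (gj * (gi * ej)))
      = ej + (mP * lP⁻¹) • (ei * ej - gj * gi * ej) := by
    calc gi * (gj * (gj * (gi * ej))) = gi * ((gj * gj) * (gi * ej)) := by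
          simp only [mul_assoc]
      _ = gi * (((lP⁻¹ * mP) • ej - mP • gj + 1) * (gi * ej)) := by rw [h.swap.sq]
      _ = gi * ((lP⁻¹ * mP) • (ej * (gi * ej)) - mP • (gj * (gi * ej)) + gi * ej) := by
          rw [add_mul, sub_mul, one_mul, smul_mul_assoc, smul_mul_assoc]
      _ = gi * ((lP⁻¹ * mP) • (lP • ej) - mP • (gj * (gi * ej)) + gi * ej) := by
          rw [← mul_assoc ej gi ej, h.egeji]
      _ = (lP⁻¹ * mP) • (lP • (gi * ej)) - mP • (gi * (gj * (gi * ej))) + gi * (gi * ej) := by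
          simp only [mul_add, mul_sub, mul_smul_comm]
      _ = (lP⁻¹ * mP) • (lP • (gi * ej)) - mP • (lP⁻¹ • (gj * (gi * ej)))
            + ((lP⁻¹ * mP) • (ei * ej) - mP • (gi * ej) + ej) := by
          rw [e_gigj, e_gigi]
      _ = ej + (mP * lP⁻¹) • (ei * ej - gj * gi * ej) := by
          rw [smul_smul, smul_smul, BMWProof.hinvml, smul_sub, mul_comm lP⁻¹ mP,
            ← mul_assoc gj gi ej]
          abel
  have hc : gi * (gj * (ei * ej - gj * gi * ej))
      = -((mP * lP⁻¹) • (ei * ej - gj * gi * ej)) := by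
    have e1 : gi * (gj * (ei * ej)) = ej := by
      calc gi * (gj * (ei * ej)) = gi * gj * ei * ej := by simp only [mul_assoc]
        _ = ej := h.eiejg
    have e2 : gi * (gj * (gj * gi * ej)) = ej + (mP * lP⁻¹) • (ei * ej - gj * gi * ej) := by
      calc gi * (gj * (gj * gi * ej)) = gi * (gj * (gj * (gi * ej))) := by
            simp only [mul_assoc]
        _ = ej + (mP * lP⁻¹) • (ei * ej - gj * gi * ej) := hB
    rw [mul_sub, mul_sub, e1, e2]
    abel
  have hginvW : (gi + mP • 1 - mP • ei) * (ei * ej - gj * gi * ej)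
      = lP • (ei * ej - gj * gi * ej) := by
    rw [sub_mul, add_mul, smul_mul_assoc, one_mul, smul_mul_assoc, hgiW, heiW,
      smul_smul, ← add_smul, ← sub_smul]
    congr 1
    linear_combination BMWProof.hlm
  have hgjW : gj * (ei * ej - gj * gi * ej) = -(mP • (ei * ej - gj * gi * ej)) := by
    have h1 := congrArg (fun z => (gi + mP • 1 - mP • ei) * z) hc
    rw [← mul_assoc, h.ginv_mul, one_mul] at h1
    rw [h1, mul_neg, mul_smul_comm, hginvW, smul_smul, mul_assoc,
      inv_mul_cancel₀ BMWProof.lP_ne, mul_one]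
  have hejW : ej * (ei * ej - gj * gi * ej) = 0 := by
    have h1 : ej * (gj * (ei * ej - gj * gi * ej))
        = ej * (-(mP • (ei * ej - gj * gi * ej))) := by rw [hgjW]
    rw [← mul_assoc, h.swap.eig, smul_mul_assoc, mul_neg, mul_smul_comm] at h1
    have h2 : (lP⁻¹ + mP) • (ej * (ei * ej - gj * gi * ej)) = (lP⁻¹ + mP) • (0 : A) := by
      rw [smul_zero, add_smul, h1]
      abel
    exact smul_cancel' BMWProof.hlm_ne h2
  have e3 : gj * (gj * (ei * ej - gj * gi * ej))
      = (mP * mP) • (ei * ej - gj * gi * ej) := by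
    rw [hgjW, mul_neg, mul_smul_comm, hgjW, smul_neg, neg_neg, smul_smul]
  have h2 : mP • (ej * (ei * ej - gj * gi * ej)) = -(lP • (ei * ej - gj * gi * ej)) := by
    calc mP • (ej * (ei * ej - gj * gi * ej))
        = (mP • ej) * (ei * ej - gj * gi * ej) := (smul_mul_assoc _ _ _).symm
      _ = lP • ((gj * gj + mP • gj - 1) * (ei * ej - gj * gi * ej)) := by
          rw [h.defEj, smul_mul_assoc]
      _ = lP • (gj * (gj * (ei * ej - gj * gi * ej))
            + mP • (gj * (ei * ej - gj * gi * ej)) - (ei * ej - gj * gi * ej)) := by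
          rw [sub_mul, add_mul, one_mul, smul_mul_assoc, mul_assoc]
      _ = lP • ((mP * mP) • (ei * ej - gj * gi * ej)
            + mP • (-(mP • (ei * ej - gj * gi * ej))) - (ei * ej - gj * gi * ej)) := by
          rw [e3, hgjW]
      _ = -(lP • (ei * ej - gj * gi * ej)) := by
          rw [smul_neg, smul_smul, ← smul_neg lP]
          congr 1
          abel
  have h6 : -(lP • (ei * ej - gj * gi * ej)) = 0 := by rw [← h2, hejW, smul_zero]
  have h7 : lP • (ei * ej - gj * gi * ej) = lP • (0 : A) := by
    rw [smul_zero, ← neg_eq_zero]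
    exact h6
  exact smul_cancel' BMWProof.lP_ne h7

lemma eiej' : ei * ej = ei * gj * gi := h.eiej.trans h.zeq.symm

lemma eiejei : ei * ej * ei = ei := by
  rw [h.eiej']
  exact h.z_ei

lemma eiejgi : ei * ej * gi = ei * gj + mP • ei - mP • (ei * ej) := by
  calc ei * ej * gi = ei * gj * gi * gi := by rw [h.eiej']
    _ = ei * gj * (gi * gi) := by rw [mul_assoc]
    _ = ei * gj * ((lP⁻¹ * mP) • ei - mP • gi + 1) := by rw [h.sq]
    _ = (lP⁻¹ * mP) • (ei * gj * ei) - mP • (ei * gj * gi) + ei * gj := by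
        rw [mul_add, mul_sub, mul_one, mul_smul_comm, mul_smul_comm]
    _ = (lP⁻¹ * mP) • (lP • ei) - mP • (ei * ej) + ei * gj := by
        rw [h.egeij, h.zeq, ← h.eiej]
    _ = ei * gj + mP • ei - mP • (ei * ej) := by
        rw [smul_smul, BMWProof.hinvml]
        abel

lemma giejei : gi * ej * ei = gj * ei + mP • ei - mP • (ej * ei) := by
  calc gi * ej * ei = gi * (ej * ei) := by rw [mul_assoc]
    _ = gi * (gi * gj * ei) := by rw [h.swap.eiej]
    _ = (gi * gi) * (gj * ei) := by simp only [mul_assoc]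
    _ = ((lP⁻¹ * mP) • ei - mP • gi + 1) * (gj * ei) := by rw [h.sq]
    _ = (lP⁻¹ * mP) • (ei * (gj * ei)) - mP • (gi * (gj * ei)) + gj * ei := by
        rw [add_mul, sub_mul, one_mul, smul_mul_assoc, smul_mul_assoc]
    _ = (lP⁻¹ * mP) • (lP • ei) - mP • (ej * ei) + gj * ei := by
        rw [← mul_assoc ei gj ei, h.egeij, ← mul_assoc gi gj ei, ← h.swap.eiej]
    _ = gj * ei + mP • ei - mP • (ej * ei) := by
        rw [smul_smul, BMWProof.hinvml]
        abel

lemma geg : gj * ei * gj = (gi + mP • 1 - mP • ei) * ej * (gi + mP • 1 - mP • ei) := by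
  have key : gi * (gj * ei * gj) * gi = ej := by
    calc gi * (gj * ei * gj) * gi = gi * gj * (ei * gj * gi) := by simp only [mul_assoc]
      _ = gi * gj * (ei * ej) := by rw [h.zeq, ← h.eiej]
      _ = gi * gj * ei * ej := by simp only [mul_assoc]
      _ = ej := h.eiejg
  calc gj * ei * gj
      = ((gi + mP • 1 - mP • ei) * gi) * (gj * ei * gj) * (gi * (gi + mP • 1 - mP • ei)) := by
        rw [h.ginv_mul, h.mul_ginv, one_mul, mul_one]
    _ = (gi + mP • 1 - mP • ei) * (gi * (gj * ei * gj) * gi) * (gi + mP • 1 - mP • ei) := by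
        simp only [mul_assoc]
    _ = (gi + mP • 1 - mP • ei) * ej * (gi + mP • 1 - mP • ei) := by rw [key]

lemma expand : (gi + mP • 1 - mP • ei) * ej * (gi + mP • 1 - mP • ei)
    = gi * ej * gi + mP • (ej * gi - ei * gj + gi * ej - gj * ei)
      + (mP * mP) • (ej - ei) := by
  have h1 : (gi + mP • 1 - mP • ei) * ej = gi * ej + mP • ej - mP • (ei * ej) := by
    rw [sub_mul, add_mul, smul_mul_assoc, one_mul, smul_mul_assoc]
  rw [h1]
  simp only [sub_mul, add_mul, mul_sub, mul_add, smul_mul_assoc, mul_smul_comm,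
    smul_smul, one_mul, mul_one]
  rw [h.giejei, h.eiejgi, h.eiejei]
  simp only [smul_add, smul_sub, smul_smul]
  abel

end BMWRelSet

end Abstract2

/-- For adjacent nodes `i ~ j`:
`g_j e_i g_j = g_i⁻¹ e_j g_i⁻¹
  = g_i e_j g_i + m(e_j g_i - e_i g_j + g_i e_j - g_j e_i) + m²(e_j - e_i)`. -/
theorem bmw_geg (n : ℕ) (adj : Fin n → Fin n → Prop)
    (hsym : ∀ i j, adj i j → adj j i) (hirr : ∀ i, ¬ adj i i)
    (i j : Fin n) (hadj : adj i j) :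
    gg n adj j * ee n adj i * gg n adj j
      = Ring.inverse (gg n adj i) * ee n adj j * Ring.inverse (gg n adj i) ∧
    Ring.inverse (gg n adj i) * ee n adj j * Ring.inverse (gg n adj i)
      = gg n adj i * ee n adj j * gg n adj i
        + mP • (ee n adj j * gg n adj i - ee n adj i * gg n adj j
                 + gg n adj i * ee n adj j - gg n adj j * ee n adj i)
        + (mP * mP) • (ee n adj j - ee n adj i) := by
  have hadj' : adj j i := hsym i j hadj
  have hrel : BMWRelSet (gg n adj i) (gg n adj j) (ee n adj i) (ee n adj j) := by
    constructor
    · simpa only [gg, map_mul] using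
        RingQuot.mkAlgHom_rel BMWField (BMWRel.braid i j hadj)
    · simpa only [gg, ee, map_smul, map_mul, map_add, map_sub, map_one] using
        RingQuot.mkAlgHom_rel BMWField (@BMWRel.defE n adj i)
    · simpa only [gg, ee, map_smul, map_mul, map_add, map_sub, map_one] using
        RingQuot.mkAlgHom_rel BMWField (@BMWRel.defE n adj j)
    · simpa only [gg, ee, map_smul, map_mul] using
        RingQuot.mkAlgHom_rel BMWField (@BMWRel.ge n adj i)
    · simpa only [gg, ee, map_smul, map_mul] using
        RingQuot.mkAlgHom_rel BMWField (@BMWRel.ge n adj j)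
    · simpa only [gg, ee, map_smul, map_mul] using
        RingQuot.mkAlgHom_rel BMWField (BMWRel.ege i j hadj)
    · simpa only [gg, ee, map_smul, map_mul] using
        RingQuot.mkAlgHom_rel BMWField (BMWRel.ege j i hadj')
  have hinv : Ring.inverse (gg n adj i)
      = gg n adj i + mP • 1 - mP • ee n adj i := by
    let u : (BMW n adj)ˣ :=
      ⟨gg n adj i, gg n adj i + mP • 1 - mP • ee n adj i, hrel.mul_ginv, hrel.ginv_mul⟩
    calc Ring.inverse (gg n adj i) = Ring.inverse (u : BMW n adj) := rfl
      _ = ((u⁻¹ : (BMW n adj)ˣ) : BMW n adj) := Ring.inverse_unit u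
      _ = gg n adj i + mP • 1 - mP • ee n adj i := rfl
  refine ⟨?_, ?_⟩
  · rw [hinv]
    exact hrel.geg
  · rw [hinv]
    exact hrel.expand
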